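/- In a proper 3-coloring of an even triangulation of a polygon, the colors of the boundary vertices, read in cyclic order around the boundary, repeat cyclically in the pattern 1,2,3,1,2,3,...; consequently the number of boundary vertices is divisible by 3. -/

import Mathlib

/-!
Combinatorial triangulated surfaces.

A triangulation is encoded by its finset of faces (each a 3-element finset of
vertices).  `IsClosedSurface` says: nonempty, every face a triangle, every edge
in exactly two faces, and the faces around each vertex are connected through
edges containing that vertex (so the link of every vertex is a single cycle).
A connected closed surface with Euler characteristic 2 is a sphere, with
Euler characteristic 1 is the projective plane, and an orientable one with
Euler characteristic 0 is the torus.  Surfaces with boundary allow edges lying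
in exactly one face; a connected such surface is simply connected iff it is a
disk (Euler characteristic 1, with boundary) or a sphere (Euler characteristic 2).
The degree of a vertex is the number of edges containing it.
-/

namespace Fisk

variable {V : Type*} [DecidableEq V]

/-- The edges of a triangulation: the 2-element subsets of its faces. -/
def edges (F : Finset (Finset V)) : Finset (Finset V) :=
  F.biUnion (fun f => f.powersetCard 2)

/-- The vertex set of a triangulation. -/
def vertices (F : Finset (Finset V)) : Finset V := F.sup id

/-- The degree of a vertex: the number of edges containing it. -/
def degree (F : Finset (Finset V)) (v : V) : ℕ :=
  ((edges F).filter (fun e => v ∈ e)).card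

/-- Two vertices are adjacent if they span an edge. -/
def IsAdjacent (F : Finset (Finset V)) (a b : V) : Prop :=
  a ≠ b ∧ ({a, b} : Finset V) ∈ edges F

/-- The faces are connected under the relation "share an edge". -/
def FacesConnected (F : Finset (Finset V)) : Prop :=
  ∀ f ∈ F, ∀ g ∈ F,
    Relation.ReflTransGen (fun x y => x ∈ F ∧ y ∈ F ∧ (x ∩ y).card = 2) f g

/-- Around every vertex, the faces containing it are connected through
edges containing it (links are connected). -/
def LinkConnected (F : Finset (Finset V)) : Prop :=
  ∀ v : V, ∀ f ∈ F, ∀ g ∈ F, v ∈ f → v ∈ g →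
    Relation.ReflTransGen
      (fun x y => x ∈ F ∧ y ∈ F ∧ v ∈ x ∧ v ∈ y ∧ (x ∩ y).card = 2) f g

/-- A triangulation of a closed surface. -/
def IsClosedSurface (F : Finset (Finset V)) : Prop :=
  F.Nonempty ∧ (∀ f ∈ F, f.card = 3) ∧
  (∀ e ∈ edges F, (F.filter (fun f => e ⊆ f)).card = 2) ∧
  LinkConnected F

/-- The Euler characteristic `#V - #E + #F`. -/
def eulerChar (F : Finset (Finset V)) : ℤ :=
  ((vertices F).card : ℤ) - ((edges F).card : ℤ) + (F.card : ℤ)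

/-- A triangulation of the 2-sphere: a connected closed surface with
Euler characteristic 2. -/
def IsSphere (F : Finset (Finset V)) : Prop :=
  IsClosedSurface F ∧ FacesConnected F ∧ eulerChar F = 2

/-- The oriented edges of an ordered triple. -/
def orientedEdges (t : V × V × V) : Finset (V × V) :=
  {(t.1, t.2.1), (t.2.1, t.2.2), (t.2.2, t.1)}

/-- Orientability: each face can be given a cyclic order of its vertices so
that no directed edge is induced by two different faces (i.e. adjacent faces
induce opposite orientations on their common edge). -/
def Orientable (F : Finset (Finset V)) : Prop :=
  ∃ o : Finset V → V × V × V,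
    (∀ f ∈ F, ({(o f).1, (o f).2.1, (o f).2.2} : Finset V) = f) ∧
    (∀ f ∈ F, ∀ g ∈ F, f ≠ g → ∀ p ∈ orientedEdges (o f), p ∉ orientedEdges (o g))

/-- A triangulation of the torus: a connected orientable closed surface with
Euler characteristic 0. -/
def IsTorus (F : Finset (Finset V)) : Prop :=
  IsClosedSurface F ∧ FacesConnected F ∧ Orientable F ∧ eulerChar F = 0

/-- A triangulation of the projective plane: a connected closed surface with
Euler characteristic 1. -/
def IsProjectivePlane (F : Finset (Finset V)) : Prop :=
  IsClosedSurface F ∧ FacesConnected F ∧ eulerChar F = 1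

/-- A triangulation of a surface, possibly with boundary: every edge lies in
one or two faces. -/
def IsSurfaceWithBoundary (F : Finset (Finset V)) : Prop :=
  F.Nonempty ∧ (∀ f ∈ F, f.card = 3) ∧
  (∀ e ∈ edges F,
    (F.filter (fun f => e ⊆ f)).card = 1 ∨ (F.filter (fun f => e ⊆ f)).card = 2) ∧
  LinkConnected F

/-- The boundary edges: edges lying in exactly one face. -/
def boundaryEdges (F : Finset (Finset V)) : Finset (Finset V) :=
  (edges F).filter (fun e => (F.filter (fun f => e ⊆ f)).card = 1)

/-- The boundary vertices: vertices of boundary edges. -/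
def boundaryVertices (F : Finset (Finset V)) : Finset V :=
  (boundaryEdges F).sup id

/-- A compact connected surface (possibly with boundary) is simply connected
iff it is a sphere (χ = 2) or a disk (χ = 1, nonempty boundary). -/
def IsSimplyConnectedSurface (F : Finset (Finset V)) : Prop :=
  IsSurfaceWithBoundary F ∧ FacesConnected F ∧
    (eulerChar F = 2 ∨ (eulerChar F = 1 ∧ (boundaryEdges F).Nonempty))

/-- A triangulation of a disk (= of a polygon, the corners being the boundary
vertices): a connected surface with nonempty boundary and Euler characteristic 1. -/
def IsDisk (F : Finset (Finset V)) : Prop :=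
  IsSurfaceWithBoundary F ∧ FacesConnected F ∧ eulerChar F = 1 ∧
    (boundaryEdges F).Nonempty

/-- A proper vertex coloring: the two endpoints of every edge get distinct
colors (for a triangulation: every triangle receives all three colors). -/
def ProperColoring {C : Type*} (F : Finset (Finset V)) (c : V → C) : Prop :=
  ∀ e ∈ edges F, ∀ u ∈ e, ∀ w ∈ e, u ≠ w → c u ≠ c w

end Fisk


open Finset in
lemma conn_card_le {α β : Type*} [DecidableEq α] [DecidableEq β]
    (s : Finset α) (t : Finset β) (r : α → α → Prop)
    (hirr : ∀ a ∈ s, ¬ r a a)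
    (hsym : ∀ a b, r a b → r b a)
    (hconn : ∀ a ∈ s, ∀ b ∈ s,
      Relation.ReflTransGen (fun x y => x ∈ s ∧ y ∈ s ∧ r x y) a b)
    (φ : α → α → β)
    (hφt : ∀ a ∈ s, ∀ b ∈ s, r a b → φ a b ∈ t)
    (hφinj : ∀ a ∈ s, ∀ b ∈ s, ∀ a' ∈ s, ∀ b' ∈ s, r a b → r a' b' → φ a b = φ a' b' →
       (a = a' ∧ b = b') ∨ (a = b' ∧ b = a')) :
    s.card ≤ t.card + 1 := by
  classical
  rcases s.eq_empty_or_nonempty with rfl | ⟨a₀, ha₀⟩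
  · simp
  set G : SimpleGraph {x // x ∈ s} :=
    { Adj := fun f g => r ↑f ↑g
      symm := ⟨fun f g h => hsym _ _ h⟩
      loopless := ⟨fun f h => hirr ↑f f.2 h⟩ } with hG
  have hadj : ∀ f g : {x // x ∈ s}, G.Adj f g ↔ r ↑f ↑g := fun _ _ => Iff.rfl
  have hpre : G.Preconnected := by
    intro f g
    rw [SimpleGraph.reachable_iff_reflTransGen]
    have key : ∀ x y, Relation.ReflTransGen (fun x y => x ∈ s ∧ y ∈ s ∧ r x y) x y →
        ∀ (hx : x ∈ s) (hy : y ∈ s),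
          Relation.ReflTransGen G.Adj ⟨x, hx⟩ ⟨y, hy⟩ := by
      intro x y h
      induction h with
      | refl => intro hx hy; exact Relation.ReflTransGen.refl
      | tail _ hstep ih =>
        intro hx hy
        exact (ih hx hstep.1).tail hstep.2.2
    have h := key _ _ (hconn _ f.2 _ g.2) f.2 g.2
    simpa using h
  haveI : Nonempty {x // x ∈ s} := ⟨⟨a₀, ha₀⟩⟩
  have hGc : G.Connected := ⟨hpre⟩
  set root : {x // x ∈ s} := ⟨a₀, ha₀⟩ with hroot
  have hstep : ∀ f : {x // x ∈ s}, f ≠ root →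
      ∃ p : {x // x ∈ s}, G.Adj p f ∧ G.dist root p + 1 = G.dist root f := by
    intro f hf
    have hd : 0 < G.dist f root := hGc.pos_dist_of_ne hf
    obtain ⟨w, hw⟩ := (hGc f root).exists_walk_length_eq_dist
    cases w with
    | nil => exact absurd hd (by simp)
    | @cons _ p _ hadjf q =>
      refine ⟨p, hadjf.symm, ?_⟩
      have h1 : G.dist p root ≤ q.length := SimpleGraph.dist_le q
      have h2 : G.dist f root ≤ G.dist p root + 1 := by
        obtain ⟨w', hw'⟩ := (hGc p root).exists_walk_length_eq_dist
        have := SimpleGraph.dist_le (SimpleGraph.Walk.cons hadjf w')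
        simpa [hw'] using this
      simp only [SimpleGraph.Walk.length_cons] at hw
      rw [show G.dist root p = G.dist p root from SimpleGraph.dist_comm,
        show G.dist root f = G.dist f root from SimpleGraph.dist_comm]
      omega
  have hcard : Fintype.card {f : {x // x ∈ s} // f ≠ root} ≤ Fintype.card {x // x ∈ t} := by
    have hex : ∀ f : {f : {x // x ∈ s} // f ≠ root},
        φ ↑(Classical.choose (hstep ↑f f.2)) ↑(f : {x // x ∈ s}) ∈ t := by
      intro f
      obtain ⟨h1, _⟩ := Classical.choose_spec (hstep ↑f f.2)
      exact hφt _ (Classical.choose (hstep ↑f f.2)).2 _ (f : {x // x ∈ s}).2 h1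
    apply Fintype.card_le_of_injective (fun f => ⟨_, hex f⟩)
    intro f f' heq
    simp only [Subtype.mk.injEq] at heq
    set p := Classical.choose (hstep ↑f f.2) with hp
    set p' := Classical.choose (hstep ↑f' f'.2) with hp'
    obtain ⟨hadj1, hdist1⟩ := Classical.choose_spec (hstep ↑f f.2)
    obtain ⟨hadj1', hdist1'⟩ := Classical.choose_spec (hstep ↑f' f'.2)
    rcases hφinj _ p.2 _ (f : {x // x ∈ s}).2 _ p'.2 _ (f' : {x // x ∈ s}).2
        hadj1 hadj1' heq with ⟨h1, h2⟩ | ⟨h1, h2⟩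
    · exact Subtype.ext (Subtype.ext h2)
    · exfalso
      have e1 : p = ((f' : {x // x ∈ s})) := Subtype.ext h1
      have e2 : ((f : {x // x ∈ s})) = p' := Subtype.ext h2
      rw [← hp, e1] at hdist1
      rw [← hp', ← e2] at hdist1'
      omega
  have h1 : Fintype.card {f : {x // x ∈ s} // f ≠ root} = s.card - 1 := by
    rw [Fintype.card_subtype_compl, Fintype.card_subtype_eq, Fintype.card_coe]
  rw [h1, Fintype.card_coe] at hcard
  have : 0 < s.card := Finset.card_pos.mpr ⟨a₀, ha₀⟩
  omega


open Fisk Finset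

section Helpers
variable {V : Type*} [DecidableEq V]

lemma Fisk.card_of_mem_edges {F : Finset (Finset V)} {e : Finset V}
    (he : e ∈ edges F) : e.card = 2 := by
  obtain ⟨f, _, hef⟩ := Finset.mem_biUnion.mp he
  exact (Finset.mem_powersetCard.mp hef).2

lemma Fisk.mem_edges_of {F : Finset (Finset V)} {f e : Finset V} (hf : f ∈ F)
    (hef : e ⊆ f) (he2 : e.card = 2) : e ∈ edges F :=
  Finset.mem_biUnion.mpr ⟨f, hf, Finset.mem_powersetCard.mpr ⟨hef, he2⟩⟩

lemma Fisk.pair_mem_edges {F : Finset (Finset V)} {f : Finset V} (hf : f ∈ F)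
    {x y : V} (hx : x ∈ f) (hy : y ∈ f) (hxy : x ≠ y) :
    ({x, y} : Finset V) ∈ edges F := by
  refine Fisk.mem_edges_of hf ?_ ?_
  · intro z hz
    simp only [Finset.mem_insert, Finset.mem_singleton] at hz
    rcases hz with rfl | rfl <;> assumption
  · rw [Finset.card_insert_of_notMem (by simp [hxy]), Finset.card_singleton]

lemma Fisk.face_struct {F : Finset (Finset V)} (h3 : ∀ f ∈ F, f.card = 3)
    {f : Finset V} (hf : f ∈ F) {v : V} (hv : v ∈ f) :
    ∃ x y, x ≠ y ∧ v ≠ x ∧ v ≠ y ∧ f = {v, x, y} := by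
  obtain ⟨a, b, d, hab, had, hbd, rfl⟩ := Finset.card_eq_three.mp (h3 f hf)
  simp only [Finset.mem_insert, Finset.mem_singleton] at hv
  rcases hv with rfl | rfl | rfl
  · exact ⟨b, d, hbd, hab, had, rfl⟩
  · exact ⟨a, d, had, hab.symm, hbd, by ext z; simp; tauto⟩
  · exact ⟨a, b, hab, had.symm, hbd.symm, by ext z; simp; tauto⟩

/-- An edge containing `v` is `{v, z}` for some `z ≠ v`. -/
lemma Fisk.edge_eq_pair {e : Finset V} (he2 : e.card = 2) {v : V} (hv : v ∈ e) :
    ∃ z, z ≠ v ∧ e = {v, z} := by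
  have h1 : (e.erase v).card = 1 := by
    rw [Finset.card_erase_of_mem hv, he2]
  obtain ⟨z, hz⟩ := Finset.card_eq_one.mp h1
  refine ⟨z, ?_, ?_⟩
  · have : z ∈ e.erase v := hz ▸ Finset.mem_singleton_self z
    exact Finset.ne_of_mem_erase this
  · rw [← Finset.insert_erase hv, hz]

end Helpers


lemma Fisk.zmod3_step : ∀ a s t : ZMod 3, s ≠ a → t ≠ a →
    ((s = a + 1) ↔ ¬ (t = a + 1)) → t - a = a - s := by
  have h : ∀ a s t : ZMod 3,
      s = a ∨ t = a ∨ ¬((s = a + 1) ↔ ¬ (t = a + 1)) ∨ t - a = a - s := by decide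
  intro a s t h1 h2 h3
  rcases h a s t with h' | h' | h' | h'
  exacts [absurd h' h1, absurd h' h2, absurd h3 h', h']

lemma Fisk.zmod3_cases : ∀ x : ZMod 3, x = 0 ∨ x = 1 ∨ x = 2 := by decide

lemma Fisk.zmod2_cases : ∀ j : ZMod 2, j = 0 ∨ j = 1 := by decide


lemma Fisk.zmod3_trich : ∀ a s t : ZMod 3, s ≠ a → t ≠ a → s ≠ t →
    ((s = a + 1 ∧ ¬ t = a + 1) ∨ (t = a + 1 ∧ ¬ s = a + 1)) := by
  have h : ∀ a s t : ZMod 3, s = a ∨ t = a ∨ s = t ∨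
      ((s = a + 1 ∧ ¬ t = a + 1) ∨ (t = a + 1 ∧ ¬ s = a + 1)) := by decide
  intro a s t h1 h2 h3
  rcases h a s t with h' | h' | h' | h' | h'
  · exact absurd h' h1
  · exact absurd h' h2
  · exact absurd h' h3
  · exact Or.inl h'
  · exact Or.inr h'

open Fisk Finset in
/-- The central local counting lemma at a vertex `v` of an even triangulation. -/
lemma Fisk.parity_lemma {V : Type*} [DecidableEq V] {F : Finset (Finset V)}
    (h3 : ∀ f ∈ F, f.card = 3)
    (h12 : ∀ e ∈ edges F,
      (F.filter (fun f => e ⊆ f)).card = 1 ∨ (F.filter (fun f => e ⊆ f)).card = 2)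
    (hlink : LinkConnected F)
    (c : V → ZMod 3) (hc : ProperColoring F c)
    (v : V) (hvdeg : Even (degree F v)) :
    ((edges F).filter
        (fun e => v ∈ e ∧ (F.filter (fun f => e ⊆ f)).card = 1)).card ≤ 2 ∧
    Even ((edges F).filter
        (fun e => v ∈ e ∧ (F.filter (fun f => e ⊆ f)).card = 1)).card ∧
    ∀ e1 e2 : Finset V,
      (edges F).filter (fun e => v ∈ e ∧ (F.filter (fun f => e ⊆ f)).card = 1)
        = {e1, e2} → e1 ≠ e2 →
      ((∃ x ∈ e1, x ≠ v ∧ c x = c v + 1) ↔ ¬ (∃ x ∈ e2, x ≠ v ∧ c x = c v + 1)) := by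
  classical
  set m : Finset V → ℕ := fun e => (F.filter (fun f => e ⊆ f)).card with hm
  set Ev : Finset (Finset V) := (edges F).filter (fun e => v ∈ e) with hEv
  set Fv : Finset (Finset V) := F.filter (fun f => v ∈ f) with hFv
  set P : Finset V → Prop := fun e => ∃ x ∈ e, x ≠ v ∧ c x = c v + 1 with hP
  set O : Finset (Finset V) := Ev.filter P with hO
  set I : Finset (Finset V) := Ev.filter (fun e => ¬ P e) with hI
  have hBv : (edges F).filter (fun e => v ∈ e ∧ (F.filter (fun f => e ⊆ f)).card = 1)
      = Ev.filter (fun e => m e = 1) := by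
    rw [hEv, Finset.filter_filter]
  rw [hBv]
  set Bv : Finset (Finset V) := Ev.filter (fun e => m e = 1) with hBvdef
  -- basic membership facts
  have hEvsub : Ev ⊆ edges F := Finset.filter_subset _ _
  have hOsub : O ⊆ Ev := Finset.filter_subset _ _
  have hIsub : I ⊆ Ev := Finset.filter_subset _ _
  -- characterization of P on pairs
  have hPpair : ∀ z : V, z ≠ v → (P {v, z} ↔ c z = c v + 1) := by
    intro z hz
    constructor
    · rintro ⟨x, hx, hxv, hcx⟩
      simp only [Finset.mem_insert, Finset.mem_singleton] at hx
      rcases hx with rfl | rfl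
      · exact absurd rfl hxv
      · exact hcx
    · intro h
      exact ⟨z, by simp, hz, h⟩
  -- per-face structure
  have hface : ∀ f ∈ Fv, (O.filter (fun e => e ⊆ f)).card = 1 ∧
      (I.filter (fun e => e ⊆ f)).card = 1 := by
    intro f hf
    obtain ⟨hfF, hvf⟩ := Finset.mem_filter.mp hf
    obtain ⟨x, y, hxy, hvx, hvy, hfeq⟩ := Fisk.face_struct h3 hfF hvf
    have hxf : x ∈ f := by rw [hfeq]; simp
    have hyf : y ∈ f := by rw [hfeq]; simp
    have hex : ({v, x} : Finset V) ∈ edges F := Fisk.pair_mem_edges hfF hvf hxf hvx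
    have hey : ({v, y} : Finset V) ∈ edges F := Fisk.pair_mem_edges hfF hvf hyf hvy
    have hexy : ({x, y} : Finset V) ∈ edges F := Fisk.pair_mem_edges hfF hxf hyf hxy
    have hcx : c x ≠ c v := hc _ hex x (by simp) v (by simp) (Ne.symm hvx)
    have hcy : c y ≠ c v := hc _ hey y (by simp) v (by simp) (Ne.symm hvy)
    have hcxy : c x ≠ c y := hc _ hexy x (by simp) y (by simp) hxy
    have hexEv : ({v, x} : Finset V) ∈ Ev := Finset.mem_filter.mpr ⟨hex, by simp⟩
    have heyEv : ({v, y} : Finset V) ∈ Ev := Finset.mem_filter.mpr ⟨hey, by simp⟩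
    have hsubx : ({v, x} : Finset V) ⊆ f := by
      intro z hz; simp only [Finset.mem_insert, Finset.mem_singleton] at hz
      rcases hz with rfl | rfl <;> assumption
    have hsuby : ({v, y} : Finset V) ⊆ f := by
      intro z hz; simp only [Finset.mem_insert, Finset.mem_singleton] at hz
      rcases hz with rfl | rfl <;> assumption
    have hchar : ∀ e ∈ Ev, e ⊆ f → e = {v, x} ∨ e = {v, y} := by
      intro e he hef
      obtain ⟨heE, hve⟩ := Finset.mem_filter.mp he
      obtain ⟨z, hzv, rfl⟩ := Fisk.edge_eq_pair (Fisk.card_of_mem_edges heE) hve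
      have hzf : z ∈ f := hef (by simp)
      rw [hfeq] at hzf
      simp only [Finset.mem_insert, Finset.mem_singleton] at hzf
      rcases hzf with rfl | rfl | rfl
      · exact absurd rfl hzv
      · exact Or.inl rfl
      · exact Or.inr rfl
    have trich := Fisk.zmod3_trich
    have hPx := hPpair x (Ne.symm hvx)
    have hPy := hPpair y (Ne.symm hvy)
    rcases trich (c v) (c x) (c y) hcx hcy hcxy with ⟨h1, h2⟩ | ⟨h1, h2⟩
    · have hOeq : O.filter (fun e => e ⊆ f) = {({v, x} : Finset V)} := by
        apply Finset.eq_singleton_iff_unique_mem.mpr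
        constructor
        · exact Finset.mem_filter.mpr ⟨Finset.mem_filter.mpr ⟨hexEv, hPx.mpr h1⟩, hsubx⟩
        · intro e he
          obtain ⟨heO, hef⟩ := Finset.mem_filter.mp he
          obtain ⟨heEv, hPe⟩ := Finset.mem_filter.mp heO
          rcases hchar e heEv hef with rfl | rfl
          · rfl
          · exact absurd (hPy.mp hPe) h2
      have hIeq : I.filter (fun e => e ⊆ f) = {({v, y} : Finset V)} := by
        apply Finset.eq_singleton_iff_unique_mem.mpr
        constructor
        · exact Finset.mem_filter.mpr
            ⟨Finset.mem_filter.mpr ⟨heyEv, fun hp => h2 (hPy.mp hp)⟩, hsuby⟩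
        · intro e he
          obtain ⟨heI, hef⟩ := Finset.mem_filter.mp he
          obtain ⟨heEv, hPe⟩ := Finset.mem_filter.mp heI
          rcases hchar e heEv hef with rfl | rfl
          · exact absurd (hPx.mpr h1) hPe
          · rfl
      rw [hOeq, hIeq]; simp
    · have hOeq : O.filter (fun e => e ⊆ f) = {({v, y} : Finset V)} := by
        apply Finset.eq_singleton_iff_unique_mem.mpr
        constructor
        · exact Finset.mem_filter.mpr ⟨Finset.mem_filter.mpr ⟨heyEv, hPy.mpr h1⟩, hsuby⟩
        · intro e he
          obtain ⟨heO, hef⟩ := Finset.mem_filter.mp he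
          obtain ⟨heEv, hPe⟩ := Finset.mem_filter.mp heO
          rcases hchar e heEv hef with rfl | rfl
          · exact absurd (hPx.mp hPe) h2
          · rfl
      have hIeq : I.filter (fun e => e ⊆ f) = {({v, x} : Finset V)} := by
        apply Finset.eq_singleton_iff_unique_mem.mpr
        constructor
        · exact Finset.mem_filter.mpr
            ⟨Finset.mem_filter.mpr ⟨hexEv, fun hp => h2 (hPx.mp hp)⟩, hsubx⟩
        · intro e he
          obtain ⟨heI, hef⟩ := Finset.mem_filter.mp he
          obtain ⟨heEv, hPe⟩ := Finset.mem_filter.mp heI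
          rcases hchar e heEv hef with rfl | rfl
          · rfl
          · exact absurd (hPy.mpr h1) hPe
      rw [hOeq, hIeq]; simp
  -- double counting
  have hcount : ∀ S : Finset (Finset V), S ⊆ Ev →
      ∑ e ∈ S, m e = ∑ f ∈ Fv, (S.filter (fun e => e ⊆ f)).card := by
    intro S hS
    have h1 : ∑ e ∈ S, m e = ∑ f ∈ F, (S.filter (fun e => e ⊆ f)).card := by
      simp only [hm, Finset.card_filter]
      rw [Finset.sum_comm]
    rw [h1]
    symm
    apply Finset.sum_subset (Finset.filter_subset _ _)
    intro f hfF hfv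
    have hvnf : v ∉ f := fun hv => hfv (Finset.mem_filter.mpr ⟨hfF, hv⟩)
    rw [Finset.card_eq_zero, Finset.filter_eq_empty_iff]
    intro e he hef
    have hve : v ∈ e := (Finset.mem_filter.mp (hS he)).2
    exact hvnf (hef hve)
  have hsumO : ∑ e ∈ O, m e = Fv.card := by
    rw [hcount O hOsub]
    rw [Finset.card_eq_sum_ones Fv]
    exact Finset.sum_congr rfl fun f hf => (hface f hf).1
  have hsumI : ∑ e ∈ I, m e = Fv.card := by
    rw [hcount I hIsub]
    rw [Finset.card_eq_sum_ones Fv]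
    exact Finset.sum_congr rfl fun f hf => (hface f hf).2
  -- sums vs boundary counts
  have hsum2 : ∀ S : Finset (Finset V), S ⊆ Ev →
      ∑ e ∈ S, m e + (S.filter (fun e => m e = 1)).card = 2 * S.card := by
    intro S hS
    have hpt : ∀ e ∈ S, m e + (if m e = 1 then 1 else 0) = 2 := by
      intro e he
      have hme : m e = 1 ∨ m e = 2 := h12 e (hEvsub (hS he))
      rcases hme with h | h <;> rw [h] <;> simp
    calc ∑ e ∈ S, m e + (S.filter (fun e => m e = 1)).card
        = ∑ e ∈ S, (m e + if m e = 1 then 1 else 0) := by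
          rw [Finset.sum_add_distrib, Finset.card_filter]
      _ = ∑ _e ∈ S, 2 := Finset.sum_congr rfl hpt
      _ = 2 * S.card := by rw [Finset.sum_const, smul_eq_mul, mul_comm]
  have hBO : Fv.card + (O.filter (fun e => m e = 1)).card = 2 * O.card := by
    rw [← hsumO]; exact hsum2 O hOsub
  have hBI : Fv.card + (I.filter (fun e => m e = 1)).card = 2 * I.card := by
    rw [← hsumI]; exact hsum2 I hIsub
  have hOI : O.card + I.card = Ev.card := Finset.card_filter_add_card_filter_not _
  have hdeg : Ev.card % 2 = 0 := Nat.even_iff.mp hvdeg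
  -- Bv splits into its P-part and non-P-part
  have hBOeq : O.filter (fun e => m e = 1) = Bv.filter P := by
    ext e
    simp only [hO, hBvdef, Finset.mem_filter]
    tauto
  have hBIeq : I.filter (fun e => m e = 1) = Bv.filter (fun e => ¬ P e) := by
    ext e
    simp only [hI, hBvdef, Finset.mem_filter]
    tauto
  have hBvsplit : (Bv.filter P).card + (Bv.filter (fun e => ¬ P e)).card = Bv.card :=
    Finset.card_filter_add_card_filter_not _
  rw [hBOeq] at hBO
  rw [hBIeq] at hBI
  -- connectivity: Fv.card ≤ #interior-v-edges + 1
  have hconnbound : Fv.card ≤ (Ev.filter (fun e => m e = 2)).card + 1 := by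
    apply conn_card_le Fv (Ev.filter (fun e => m e = 2)) (fun f g => (f ∩ g).card = 2)
    · intro a ha h
      obtain ⟨haF, _⟩ := Finset.mem_filter.mp ha
      rw [Finset.inter_self, h3 a haF] at h
      omega
    · intro a b h
      rwa [Finset.inter_comm]
    · intro a ha b hb
      obtain ⟨haF, hva⟩ := Finset.mem_filter.mp ha
      obtain ⟨hbF, hvb⟩ := Finset.mem_filter.mp hb
      have := hlink v a haF b hbF hva hvb
      refine Relation.ReflTransGen.mono ?_ _ _ this
      rintro x y ⟨hx, hy, hvx, hvy, hcard⟩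
      exact ⟨Finset.mem_filter.mpr ⟨hx, hvx⟩, Finset.mem_filter.mpr ⟨hy, hvy⟩, hcard⟩
    · intro a ha b hb hr
      obtain ⟨haF, hva⟩ := Finset.mem_filter.mp ha
      obtain ⟨hbF, hvb⟩ := Finset.mem_filter.mp hb
      have hane : a ≠ b := by
        intro h; rw [h, Finset.inter_self, h3 b hbF] at hr; omega
      have heE : a ∩ b ∈ edges F :=
        Fisk.mem_edges_of haF Finset.inter_subset_left hr
      have hsub : ({a, b} : Finset (Finset V)) ⊆ F.filter (fun f => a ∩ b ⊆ f) := by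
        intro z hz
        simp only [Finset.mem_insert, Finset.mem_singleton] at hz
        rcases hz with rfl | rfl
        · exact Finset.mem_filter.mpr ⟨haF, Finset.inter_subset_left⟩
        · exact Finset.mem_filter.mpr ⟨hbF, Finset.inter_subset_right⟩
      have h2le : 2 ≤ (F.filter (fun f => a ∩ b ⊆ f)).card := by
        have := Finset.card_le_card hsub
        rwa [Finset.card_insert_of_notMem (by simp [hane]), Finset.card_singleton] at this
      have hm2 : m (a ∩ b) = 2 := by
        rcases h12 _ heE with h | h <;> simp [hm] at h ⊢ <;> omega
      exact Finset.mem_filter.mpr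
        ⟨Finset.mem_filter.mpr ⟨heE, Finset.mem_inter.mpr ⟨hva, hvb⟩⟩, hm2⟩
    · intro a ha b hb a' ha' b' hb' hr hr' heq
      obtain ⟨haF, hva⟩ := Finset.mem_filter.mp ha
      obtain ⟨hbF, hvb⟩ := Finset.mem_filter.mp hb
      obtain ⟨haF', hva'⟩ := Finset.mem_filter.mp ha'
      obtain ⟨hbF', hvb'⟩ := Finset.mem_filter.mp hb'
      have hane : a ≠ b := by
        intro h; rw [h, Finset.inter_self, h3 b hbF] at hr; omega
      have hane' : a' ≠ b' := by
        intro h; rw [h, Finset.inter_self, h3 b' hbF'] at hr'; omega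
      have key : ∀ x y : Finset V, x ∈ F → y ∈ F → x ≠ y → (x ∩ y).card = 2 →
          F.filter (fun f => x ∩ y ⊆ f) = {x, y} := by
        intro x y hx hy hne hcard
        have heE : x ∩ y ∈ edges F := Fisk.mem_edges_of hx Finset.inter_subset_left hcard
        have hsub : ({x, y} : Finset (Finset V)) ⊆ F.filter (fun f => x ∩ y ⊆ f) := by
          intro z hz
          simp only [Finset.mem_insert, Finset.mem_singleton] at hz
          rcases hz with rfl | rfl
          · exact Finset.mem_filter.mpr ⟨hx, Finset.inter_subset_left⟩
          · exact Finset.mem_filter.mpr ⟨hy, Finset.inter_subset_right⟩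
        have hcard2 : ({x, y} : Finset (Finset V)).card = 2 := by
          rw [Finset.card_insert_of_notMem (by simp [hne]), Finset.card_singleton]
        have hle : (F.filter (fun f => x ∩ y ⊆ f)).card ≤ 2 := by
          rcases h12 _ heE with h | h <;> omega
        exact (Finset.eq_of_subset_of_card_le hsub (by omega)).symm
      have h1 := key a b haF hbF hane hr
      have h2 := key a' b' haF' hbF' hane' hr'
      rw [heq] at h1
      have hpair : ({a, b} : Finset (Finset V)) = {a', b'} := h1.symm.trans h2
      have ha'mem : a' ∈ ({a, b} : Finset (Finset V)) := by rw [hpair]; simp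
      have hb'mem : b' ∈ ({a, b} : Finset (Finset V)) := by rw [hpair]; simp
      simp only [Finset.mem_insert, Finset.mem_singleton] at ha'mem hb'mem
      rcases ha'mem with rfl | rfl
      · rcases hb'mem with rfl | rfl
        · exact absurd rfl hane'
        · exact Or.inl ⟨rfl, rfl⟩
      · rcases hb'mem with rfl | rfl
        · exact Or.inr ⟨rfl, rfl⟩
        · exact absurd rfl hane'.symm
  -- relate Bv and interior count
  have hBvint : Bv.card + (Ev.filter (fun e => m e = 2)).card = Ev.card := by
    rw [hBvdef]
    have : Ev.filter (fun e => m e = 2) = Ev.filter (fun e => ¬ m e = 1) := by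
      apply Finset.filter_congr
      intro e he
      rcases h12 e (hEvsub he) with h | h <;> simp [hm] at h ⊢ <;> omega
    rw [this]
    exact Finset.card_filter_add_card_filter_not _
  have hsumEv : ∑ e ∈ Ev, m e + Bv.card = 2 * Ev.card := hsum2 Ev (Finset.Subset.refl _)
  have hsumEv2 : ∑ e ∈ Ev, m e = 2 * Fv.card := by
    rw [← Finset.sum_filter_add_sum_filter_not Ev P, ← hO, ← hI, hsumO, hsumI]
    omega
  rw [hsumEv2] at hsumEv
  refine ⟨by omega, ?_, ?_⟩
  · rw [Nat.even_iff]; omega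
  · intro e1 e2 hBveq hne12
    have hcard2 : Bv.card = 2 := by
      rw [hBveq, Finset.card_insert_of_notMem (by simp [hne12]), Finset.card_singleton]
    have hBO1 : (Bv.filter P).card = 1 ∧ (Bv.filter (fun e => ¬ P e)).card = 1 := by
      constructor <;> omega
    by_cases hP1 : P e1 <;> by_cases hP2 : P e2
    · exfalso
      have : Bv.filter P = Bv := by
        apply Finset.filter_true_of_mem
        intro e he
        rw [hBveq] at he
        simp only [Finset.mem_insert, Finset.mem_singleton] at he
        rcases he with rfl | rfl <;> assumption
      rw [this] at hBO1
      omega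
    · exact Iff.intro (fun _ => hP2) (fun _ => hP1)
    · exact ⟨fun h => absurd h hP1, fun h => (h hP2).elim⟩
    · exfalso
      have : Bv.filter P = ∅ := by
        rw [Finset.filter_eq_empty_iff]
        intro e he
        rw [hBveq] at he
        simp only [Finset.mem_insert, Finset.mem_singleton] at he
        rcases he with rfl | rfl <;> assumption
      rw [this] at hBO1
      simp at hBO1



open Fisk in
/-- In a proper 3-coloring of an even triangulation of a polygon, the colors
of the boundary vertices, read in cyclic order around the boundary, repeat
cyclically in the pattern `1,2,3,1,2,3,…` (i.e. each cyclic step adds a fixed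
nonzero constant in `ZMod 3`); consequently the number `n` of boundary
vertices is divisible by 3. -/
theorem boundary_colors_cyclic {V : Type*} [DecidableEq V]
    (F : Finset (Finset V)) (hF : IsDisk F)
    (heven : ∀ v ∈ vertices F, Even (degree F v))
    (c : V → ZMod 3) (hc : ProperColoring F c)
    (n : ℕ) (hn : 0 < n) (b : ZMod n → V)
    (hinj : Function.Injective b)
    (hrange : ∀ v : V, v ∈ boundaryVertices F ↔ ∃ i, b i = v)
    (hcyc : ∀ i : ZMod n, ({b i, b (i + 1)} : Finset V) ∈ boundaryEdges F) :
    (∃ ε : ZMod 3, (ε = 1 ∨ ε = 2) ∧ ∀ i : ZMod n, c (b (i + 1)) = c (b i) + ε)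
      ∧ 3 ∣ n := by
  classical
  obtain ⟨⟨hFne, h3, h12, hlink⟩, hfc, hchi, hbnon⟩ := hF
  haveI : NeZero n := ⟨hn.ne'⟩
  have hbE : ∀ e ∈ boundaryEdges F, e ∈ edges F := fun e he => (Finset.mem_filter.mp he).1
  have hb1 : ∀ e ∈ boundaryEdges F, (F.filter (fun f => e ⊆ f)).card = 1 :=
    fun e he => (Finset.mem_filter.mp he).2
  -- rule out n = 1
  have hn1 : n ≠ 1 := by
    rintro rfl
    have h := hcyc 0
    have h01 : (0 : ZMod 1) + 1 = 0 := Subsingleton.elim _ _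
    rw [h01] at h
    have := Fisk.card_of_mem_edges (hbE _ h)
    simp at this
  have hone : (1 : ZMod n) ≠ 0 := by
    intro h
    have h' : n ∣ 1 := (ZMod.natCast_eq_zero_iff 1 n).mp (by exact_mod_cast h)
    exact hn1 (Nat.dvd_one.mp h')
  have hbne_adj : ∀ i : ZMod n, b i ≠ b (i + 1) := by
    intro i h
    exact hone (left_eq_add.mp (hinj h))
  have hcdiff : ∀ i : ZMod n, c (b (i + 1)) ≠ c (b i) :=
    fun i => (hc _ (hbE _ (hcyc i)) (b i) (by simp) (b (i + 1)) (by simp) (hbne_adj i)).symm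
  have hvert : ∀ {e : Finset V}, e ∈ boundaryEdges F → ∀ {v : V}, v ∈ e → v ∈ vertices F := by
    intro e he v hv
    obtain ⟨f, hf, hef⟩ := Finset.mem_biUnion.mp (hbE _ he)
    exact Finset.mem_sup.mpr ⟨f, hf, (Finset.mem_powersetCard.mp hef).1 hv⟩
  have hmemBv : ∀ (v : V) (e : Finset V), e ∈ boundaryEdges F → v ∈ e →
      e ∈ (edges F).filter (fun e => v ∈ e ∧ (F.filter (fun f => e ⊆ f)).card = 1) :=
    fun v e he hv => Finset.mem_filter.mpr ⟨hbE _ he, hv, hb1 _ he⟩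
  have hpar := fun (v : V) (hv : v ∈ vertices F) =>
    Fisk.parity_lemma h3 h12 hlink c hc v (heven v hv)
  -- rule out n = 2
  have hn2 : n ≠ 2 := by
    rintro rfl
    have h01 : ({b 0, b (0 + 1)} : Finset V) = {b 0, b 1} := by norm_num
    have he0 : ({b 0, b 1} : Finset V) ∈ boundaryEdges F := by
      have := hcyc 0; rwa [h01] at this
    have hv : b 0 ∈ vertices F := hvert he0 (by simp)
    obtain ⟨-, heven2, -⟩ := hpar (b 0) hv
    have hss : ((edges F).filter
        (fun e => (b 0) ∈ e ∧ (F.filter (fun f => e ⊆ f)).card = 1))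
        ⊆ {({b 0, b 1} : Finset V)} := by
      intro e he
      obtain ⟨heE, hv0, hm1⟩ := Finset.mem_filter.mp he
      obtain ⟨z, hzv, rfl⟩ := Fisk.edge_eq_pair (Fisk.card_of_mem_edges heE) hv0
      have hzb : z ∈ boundaryVertices F := by
        refine Finset.mem_sup.mpr ⟨{b 0, z}, ?_, by simp⟩
        exact Finset.mem_filter.mpr ⟨heE, hm1⟩
      obtain ⟨j, hj⟩ := (hrange z).mp hzb
      have hj1 : j = 1 := by
        rcases Fisk.zmod2_cases j with rfl | rfl
        · exact absurd hj.symm hzv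
        · rfl
      rw [hj1] at hj
      rw [← hj]
      simp
    have hmem := hmemBv (b 0) _ he0 (by simp : b 0 ∈ ({b 0, b 1} : Finset V))
    have hcard1 : ((edges F).filter
        (fun e => (b 0) ∈ e ∧ (F.filter (fun f => e ⊆ f)).card = 1)).card = 1 := by
      have hle := Finset.card_le_card hss
      simp only [Finset.card_singleton] at hle
      have hpos := Finset.card_pos.mpr ⟨_, hmem⟩
      omega
    rw [hcard1] at heven2
    simp at heven2
  have hn3 : 2 < n := by omega
  have htwo : (2 : ZMod n) ≠ 0 := by
    intro h
    have h' : n ∣ 2 := (ZMod.natCast_eq_zero_iff 2 n).mp (by exact_mod_cast h)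
    have := Nat.le_of_dvd (by norm_num) h'
    omega
  -- the key step: consecutive color differences agree
  have hstep : ∀ i : ZMod n, c (b (i + 1)) - c (b i) = c (b i) - c (b (i - 1)) := by
    intro i
    have he1b : ({b (i - 1), b i} : Finset V) ∈ boundaryEdges F := by
      have := hcyc (i - 1)
      rwa [sub_add_cancel] at this
    have he2b := hcyc i
    have hne1 : b (i - 1) ≠ b i := by
      intro h
      exact hone (sub_eq_self.mp (hinj h))
    have hne2 : b i ≠ b (i + 1) := hbne_adj i
    have hne13 : b (i - 1) ≠ b (i + 1) := by
      intro h
      have h2 : i - 1 = i + 1 := hinj h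
      have h3' : i = i + 2 := by linear_combination h2
      exact htwo (left_eq_add.mp h3')
    have he12 : ({b (i - 1), b i} : Finset V) ≠ {b i, b (i + 1)} := by
      intro h
      have hm : b (i - 1) ∈ ({b i, b (i + 1)} : Finset V) := h ▸ (by simp)
      simp only [Finset.mem_insert, Finset.mem_singleton] at hm
      rcases hm with h' | h'
      · exact hne1 h'
      · exact hne13 h'
    obtain ⟨hle2, -, hiff⟩ := hpar (b i) (hvert he2b (by simp))
    have hsubB : ({({b (i - 1), b i} : Finset V), ({b i, b (i + 1)} : Finset V)} :
        Finset (Finset V)) ⊆ (edges F).filter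
        (fun e => (b i) ∈ e ∧ (F.filter (fun f => e ⊆ f)).card = 1) := by
      intro e he
      simp only [Finset.mem_insert, Finset.mem_singleton] at he
      rcases he with rfl | rfl
      · exact hmemBv (b i) _ he1b (by simp)
      · exact hmemBv (b i) _ he2b (by simp)
    have hpaircard : ({({b (i - 1), b i} : Finset V), ({b i, b (i + 1)} : Finset V)} :
        Finset (Finset V)).card = 2 := by
      rw [Finset.card_insert_of_notMem (by simp [he12]), Finset.card_singleton]
    have hBveq := Finset.eq_of_subset_of_card_le hsubB (by rw [hpaircard]; exact hle2)
    have hiff2 := hiff _ _ hBveq.symm he12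
    have hP1 : (∃ x ∈ ({b (i - 1), b i} : Finset V), x ≠ b i ∧ c x = c (b i) + 1)
        ↔ c (b (i - 1)) = c (b i) + 1 := by
      constructor
      · rintro ⟨x, hx, hxv, hcx⟩
        simp only [Finset.mem_insert, Finset.mem_singleton] at hx
        rcases hx with rfl | rfl
        · exact hcx
        · exact absurd rfl hxv
      · intro h; exact ⟨b (i - 1), by simp, hne1, h⟩
    have hP2 : (∃ x ∈ ({b i, b (i + 1)} : Finset V), x ≠ b i ∧ c x = c (b i) + 1)
        ↔ c (b (i + 1)) = c (b i) + 1 := by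
      constructor
      · rintro ⟨x, hx, hxv, hcx⟩
        simp only [Finset.mem_insert, Finset.mem_singleton] at hx
        rcases hx with rfl | rfl
        · exact absurd rfl hxv
        · exact hcx
      · intro h; exact ⟨b (i + 1), by simp, hne2.symm, h⟩
    rw [hP1, hP2] at hiff2
    have hc1 : c (b (i - 1)) ≠ c (b i) :=
      hc _ (hbE _ he1b) (b (i - 1)) (by simp) (b i) (by simp) hne1
    have hc2 : c (b (i + 1)) ≠ c (b i) := hcdiff i
    exact Fisk.zmod3_step (c (b i)) (c (b (i - 1))) (c (b (i + 1))) hc1 hc2 hiff2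
  -- propagate
  set ε := c (b (0 + 1)) - c (b 0) with hεdef
  have hkey : ∀ k : ℕ, c (b ((k : ZMod n) + 1)) - c (b (k : ZMod n)) = ε := by
    intro k
    induction k with
    | zero => rw [hεdef]; norm_num
    | succ k ih =>
      have h := hstep ((k : ZMod n) + 1)
      rw [add_sub_cancel_right] at h
      push_cast
      rw [h]
      exact ih
  have hδ : ∀ i : ZMod n, c (b (i + 1)) - c (b i) = ε := by
    intro i
    have h := hkey i.val
    rwa [ZMod.natCast_rightInverse i] at h
  have hεne : ε ≠ 0 := sub_ne_zero.mpr (hcdiff 0)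
  have hε12 : ε = 1 ∨ ε = 2 := by
    rcases Fisk.zmod3_cases ε with h | h | h
    · exact absurd h hεne
    · exact Or.inl h
    · exact Or.inr h
  refine ⟨⟨ε, hε12, fun i => by linear_combination hδ i⟩, ?_⟩
  have hiter : ∀ k : ℕ, c (b (k : ZMod n)) = c (b 0) + (k : ZMod 3) * ε := by
    intro k
    induction k with
    | zero => simp
    | succ k ih =>
      have h := hδ (k : ZMod n)
      push_cast
      calc c (b ((k : ZMod n) + 1)) = c (b (k : ZMod n)) + ε := by linear_combination h
        _ = c (b 0) + (k : ZMod 3) * ε + ε := by rw [ih]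
        _ = c (b 0) + ((k : ZMod 3) + 1) * ε := by ring
  have hn0 := hiter n
  rw [ZMod.natCast_self] at hn0
  have hz : (n : ZMod 3) * ε = 0 := by linear_combination -hn0
  haveI : Fact (Nat.Prime 3) := ⟨by norm_num⟩
  have hzn : (n : ZMod 3) = 0 := by
    rcases mul_eq_zero.mp hz with h | h
    · exact h
    · exact absurd h hεne
  exact (ZMod.natCast_eq_zero_iff n 3).mp hzn
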